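/- Let M be a monoid and δ ∈ M an element that right-dominates a subset S of M (i.e., gδⁿ ≼ δ^{n+1} for every n ≥ 0 and g ∈ S). Then g ≼ δⁿ for every n and every g ∈ Sⁿ, and any two elements of the submonoid of M generated by S admit a common right-multiple. -/

import Mathlib

namespace Stmt10

/-- `g` is a product of `n` elements of `S`. -/
def InPow {M : Type*} [Monoid M] (S : Set M) (n : ℕ) (g : M) : Prop :=
  ∃ l : List M, l.length = n ∧ (∀ x ∈ l, x ∈ S) ∧ l.prod = g

lemma key {M : Type*} [Monoid M] (S : Set M) (δ : M)
    (hdom : ∀ n : ℕ, ∀ g ∈ S, g * δ ^ n ∣ δ ^ (n + 1)) :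
    ∀ (l : List M), (∀ x ∈ l, x ∈ S) → ∀ m : ℕ,
      l.prod * δ ^ m ∣ δ ^ (l.length + m) := by
  intro l
  induction l with
  | nil => intro _ m; simp
  | cons x t ih =>
    intro hmem m
    have ht : t.prod * δ ^ m ∣ δ ^ (t.length + m) :=
      ih (fun y hy => hmem y (List.mem_cons_of_mem _ hy)) m
    have h1 : x * (t.prod * δ ^ m) ∣ x * δ ^ (t.length + m) :=
      mul_dvd_mul_left x ht
    have h2 : x * δ ^ (t.length + m) ∣ δ ^ (t.length + m + 1) :=
      hdom _ x (hmem x List.mem_cons_self)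
    have := dvd_trans h1 h2
    simpa [List.prod_cons, mul_assoc, Nat.add_right_comm, Nat.add_comm,
      Nat.add_assoc, Nat.add_left_comm] using this

/-- **Lemma 5.7.** If `δ` right-dominates a subset `S` of a monoid `M`
(`g δⁿ ≼ δ^{n+1}` for all `n ≥ 0` and `g ∈ S`), then `g ≼ δⁿ` for every `g ∈ Sⁿ`,
and any two elements of the submonoid generated by `S` admit a common right-multiple. -/
theorem stmt_10 {M : Type*} [Monoid M] (S : Set M) (δ : M)
    (hdom : ∀ n : ℕ, ∀ g ∈ S, g * δ ^ n ∣ δ ^ (n + 1)) :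
    (∀ n : ℕ, ∀ g : M, InPow S n g → g ∣ δ ^ n) ∧
    (∀ g ∈ Submonoid.closure S, ∀ h ∈ Submonoid.closure S,
      ∃ f : M, g ∣ f ∧ h ∣ f) := by
  have main : ∀ n : ℕ, ∀ g : M, InPow S n g → g ∣ δ ^ n := by
    rintro n g ⟨l, hlen, hmem, hprod⟩
    have := key S δ hdom l hmem 0
    simpa [hlen, hprod] using this
  refine ⟨main, ?_⟩
  intro g hg h hh
  obtain ⟨l, hl, hlp⟩ := Submonoid.exists_list_of_mem_closure hg
  obtain ⟨l', hl', hlp'⟩ := Submonoid.exists_list_of_mem_closure hh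
  have hg' : g ∣ δ ^ l.length := main _ _ ⟨l, rfl, hl, hlp⟩
  have hh' : h ∣ δ ^ l'.length := main _ _ ⟨l', rfl, hl', hlp'⟩
  exact ⟨δ ^ (max l.length l'.length),
    hg'.trans (pow_dvd_pow _ (le_max_left _ _)),
    hh'.trans (pow_dvd_pow _ (le_max_right _ _))⟩

end Stmt10
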